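/- Let X^n ⊂ ℝ^d (d ≥ 2), let y ∉ cov(X^n), and let Y^m consist of m repetitions of y. Then (i) for every x ∈ cov(X^n ∪ Y^m) \ cov(X^n) with x ≠ y, D(x, X^n ∪ Y^m) ≤ m/(n+m); (ii) D(y, X^n ∪ Y^m) ≥ m/(n+m); consequently D(y, X^n ∪ Y^m) = sup over z ∈ cov(X^n ∪ Y^m) \ cov(X^n) of D(z, X^n ∪ Y^m). -/

import Mathlib

open scoped RealInnerProductSpace
open MeasureTheory

noncomputable section

/-- `E d` is the Euclidean space `ℝ^d`. -/
abbrev E (d : ℕ) : Type := EuclideanSpace ℝ (Fin d)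

/-- A sample `X` of `n` points in `ℝ^d` is in general position if no affine hyperplane
(encoded as `{x | ⟪v, x⟫ = c}` for some `v ≠ 0`) contains more than `d` of the points. -/
def inGeneralPosition {d n : ℕ} (X : Fin n → E d) : Prop :=
  ∀ v : E d, v ≠ 0 → ∀ c : ℝ, ({i : Fin n | ⟪v, X i⟫ = c} : Set (Fin n)).ncard ≤ d

/-- Number of sample points in the closed halfspace `{z | ⟪u, z⟫ ≤ ⟪u, x⟫}`. -/
def sideCount {d n : ℕ} (X : Fin n → E d) (u x : E d) : ℕ :=
  ({i : Fin n | ⟪u, X i⟫ ≤ ⟪u, x⟫} : Set (Fin n)).ncard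

/-- Tukey's halfspace depth of `x` with respect to the sample `X`. -/
def depth {d n : ℕ} (X : Fin n → E d) (x : E d) : ℝ :=
  sInf {r : ℝ | ∃ u : E d, ‖u‖ = 1 ∧ r = (sideCount X u x : ℝ) / (n : ℝ)}

/-- The maximum Tukey depth `λ*` of the sample `X`. -/
def maxDepth {d n : ℕ} (X : Fin n → E d) : ℝ :=
  sSup (Set.range (depth X))

/-- The set `M(X)` of deepest points. -/
def MSet {d n : ℕ} (X : Fin n → E d) : Set (E d) :=
  {x | depth X x = maxDepth X}

/-- `U_x`: the set of optimal (unit) directions realizing the depth at `x`. -/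
def USet {d n : ℕ} (X : Fin n → E d) (x : E d) : Set (E d) :=
  {u | ‖u‖ = 1 ∧ (sideCount X u x : ℝ) / (n : ℝ) = depth X x}

/-- `H_{x,y}`: the open hemisphere of unit directions `u` with `⟪u, x⟫ < ⟪u, y⟫`. -/
def HSet {d : ℕ} (x y : E d) : Set (E d) :=
  {u | ‖u‖ = 1 ∧ ⟪u, x⟫ < ⟪u, y⟫}

/-- `B_z`. -/
def BSet {d n : ℕ} (X : Fin n → E d) (z : E d) : Set (E d) :=
  {x | x ∈ MSet X ∧ USet X x ∩ HSet x z = ∅}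

/-- `B̃_z = B_z \ {z}`. -/
def BTilde {d n : ℕ} (X : Fin n → E d) (z : E d) : Set (E d) :=
  BSet X z \ {z}

/-- `v` is a unit vector normal to an affine hyperplane spanned by `d` of the sample points. -/
def normalToSampleHyperplane {d n : ℕ} (X : Fin n → E d) (v : E d) : Prop :=
  ‖v‖ = 1 ∧ ∃ (s : Finset (Fin n)) (c : ℝ), s.card = d ∧
    (affineSpan ℝ (X '' (s : Set (Fin n))) : Set (E d)) = {x : E d | ⟪v, x⟫ = c}

/-- Condition (2.1) on a unit direction `u`. -/
def cond21 {d n : ℕ} (X : Fin n → E d) (u : E d) : Prop :=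
  ∀ v : E d, normalToSampleHyperplane X v → ⟪u, v⟫ ≠ 0

/-- `A` represents the columns of a `d × (d-1)` matrix which together with the unit
vector `u` form an orthonormal basis of `ℝ^d`. -/
def IsAu {d : ℕ} (u : E d) (A : Fin (d - 1) → E d) : Prop :=
  ‖u‖ = 1 ∧ Orthonormal ℝ A ∧ ∀ j, ⟪A j, u⟫ = 0

/-- The `A_u`-projection `A_u^T x ∈ ℝ^{d-1}` of a point `x ∈ ℝ^d`. -/
def proj {d : ℕ} (A : Fin (d - 1) → E d) (x : E d) : E (d - 1) :=
  (WithLp.equiv 2 (Fin (d - 1) → ℝ)).symm (fun j => ⟪A j, x⟫)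

/-- The embedding `A_u x = ∑ j x_j A_j ∈ ℝ^d` of a point `x ∈ ℝ^{d-1}`. -/
def embed {d : ℕ} (A : Fin (d - 1) → E d) (x : E (d - 1)) : E d :=
  ∑ j, x j • A j

/-- `λ₀ = inf_{u ∈ S^{d-1}} λ*(X_u^n)`, the infimum over all directions of the maximum
Tukey depth of the projected sample. -/
def lambda0 {d n : ℕ} (X : Fin n → E d) : ℝ :=
  sInf {r : ℝ | ∃ (u : E d) (A : Fin (d - 1) → E d),
    IsAu u A ∧ r = maxDepth (fun i => proj A (X i))}

/-- The average (barycenter) of a set `K ⊆ ℝ^d`, taken with respect to the Hausdorff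
measure of dimension equal to the affine dimension of `K`. -/
def setAverage {d : ℕ} (K : Set (E d)) : E d :=
  (μH[(Module.finrank ℝ (affineSpan ℝ K).direction : ℝ)] K).toReal⁻¹ •
    ∫ x in K, x ∂(μH[(Module.finrank ℝ (affineSpan ℝ K).direction : ℝ)])

/-- Tukey's halfspace median: the average of all deepest points. -/
def TukeyMedian {d n : ℕ} (X : Fin n → E d) : E d :=
  setAverage (MSet X)

/-- `m` contaminating points suffice to break down the Tukey median at `X`. -/
def breaksDown {d n : ℕ} (X : Fin n → E d) (m : ℕ) : Prop :=
  ∀ C : ℝ, ∃ Y : Fin m → E d, C < ‖TukeyMedian (Fin.append X Y) - TukeyMedian X‖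

/-- The finite sample (additional) breakdown point of the Tukey median at `X`. -/
def FSBP {d n : ℕ} (X : Fin n → E d) : ℝ :=
  sInf {r : ℝ | ∃ m : ℕ, 1 ≤ m ∧ breaksDown X m ∧ r = (m : ℝ) / ((n : ℝ) + (m : ℝ))}


/-! ### Auxiliary lemmas for `depth_outside_hull` -/

private lemma aux_exists_unit {d : ℕ} (hd : 0 < d) : ∃ u : E d, ‖u‖ = 1 :=
  ⟨EuclideanSpace.single ⟨0, hd⟩ (1:ℝ), by simp [EuclideanSpace.norm_single]⟩

private lemma aux_natAdd_inj (n m : ℕ) :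
    Function.Injective (Fin.natAdd n : Fin m → Fin (n+m)) := by
  intro a b h
  have := congrArg Fin.val h
  simp [Fin.natAdd] at this
  exact Fin.ext this

private lemma aux_ncard_range_natAdd (n m : ℕ) :
    (Set.range (Fin.natAdd n : Fin m → Fin (n+m))).ncard = m := by
  rw [← Set.image_univ, Set.ncard_image_of_injective _ (aux_natAdd_inj n m), Set.ncard_univ,
    Nat.card_eq_fintype_card, Fintype.card_fin]

private lemma aux_exists_sep {d n : ℕ} (hd : 0 < d) (X : Fin n → E d) (x : E d)
    (hx : x ∉ convexHull ℝ (Set.range X)) :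
    ∃ u : E d, ‖u‖ = 1 ∧ ∀ i, ⟪u, x⟫ < ⟪u, X i⟫ := by
  rcases isEmpty_or_nonempty (Fin n) with h | h
  · obtain ⟨u, hu⟩ := aux_exists_unit hd
    exact ⟨u, hu, fun i => (IsEmpty.false i).elim⟩
  · obtain ⟨f, c, hfx, hfb⟩ := geometric_hahn_banach_point_closed
      (convex_convexHull ℝ _) ((Set.finite_range X).isCompact_convexHull ℝ).isClosed hx
    set v := (InnerProductSpace.toDual ℝ (E d)).symm f with hv
    have hfv : ∀ z, f z = ⟪v, z⟫ := fun z => by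
      rw [hv]; exact (InnerProductSpace.toDual_symm_apply).symm
    have hlt : ∀ i, ⟪v, x⟫ < ⟪v, X i⟫ := fun i => by
      have := hfb (X i) (subset_convexHull ℝ _ ⟨i, rfl⟩)
      rw [hfv] at this hfx; linarith
    have hv0 : v ≠ 0 := by
      intro h0
      have := hlt (Classical.arbitrary _)
      rw [h0] at this; simp at this
    refine ⟨‖v‖⁻¹ • v, ?_, fun i => ?_⟩
    · simp [norm_smul, inv_mul_cancel₀ (norm_ne_zero_iff.2 hv0)]
    · rw [real_inner_smul_left, real_inner_smul_left]
      exact mul_lt_mul_of_pos_left (hlt i) (inv_pos.2 (norm_pos_iff.2 hv0))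

private lemma aux_sideCount_le_m {d n m : ℕ} (X : Fin n → E d) (y x u : E d)
    (h : ∀ i, ⟪u, x⟫ < ⟪u, X i⟫) :
    sideCount (Fin.append X (fun _ : Fin m => y)) u x ≤ m := by
  have hsub : {i : Fin (n+m) | ⟪u, Fin.append X (fun _ : Fin m => y) i⟫ ≤ ⟪u, x⟫}
      ⊆ Set.range (Fin.natAdd n : Fin m → Fin (n+m)) := by
    intro i hi
    rcases lt_or_ge (i : ℕ) n with hin | hin
    · exfalso
      have hie : i = Fin.castAdd m ⟨i, hin⟩ := Fin.ext rfl
      rw [Set.mem_setOf_eq, hie, Fin.append_left] at hi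
      exact absurd hi (not_le.2 (h _))
    · refine ⟨⟨(i:ℕ) - n, by omega⟩, Fin.ext ?_⟩
      simp [Fin.natAdd]; omega
  calc sideCount (Fin.append X (fun _ : Fin m => y)) u x
      ≤ (Set.range (Fin.natAdd n : Fin m → Fin (n+m))).ncard :=
        Set.ncard_le_ncard hsub (Set.toFinite _)
    _ = m := aux_ncard_range_natAdd n m

private lemma aux_m_le_sideCount {d n m : ℕ} (X : Fin n → E d) (y u : E d) :
    m ≤ sideCount (Fin.append X (fun _ : Fin m => y)) u y := by
  have hsub : Set.range (Fin.natAdd n : Fin m → Fin (n+m))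
      ⊆ {i : Fin (n+m) | ⟪u, Fin.append X (fun _ : Fin m => y) i⟫ ≤ ⟪u, y⟫} := by
    rintro i ⟨j, rfl⟩
    simp [Fin.append_right]
  calc m = (Set.range (Fin.natAdd n : Fin m → Fin (n+m))).ncard :=
        (aux_ncard_range_natAdd n m).symm
    _ ≤ _ := Set.ncard_le_ncard hsub (Set.toFinite _)

private lemma aux_depth_bddBelow {d n : ℕ} (X : Fin n → E d) (x : E d) :
    ∀ r ∈ {r : ℝ | ∃ u : E d, ‖u‖ = 1 ∧ r = (sideCount X u x : ℝ) / (n : ℝ)}, (0:ℝ) ≤ r := by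
  rintro r ⟨u, hu, rfl⟩; positivity

private lemma aux_depth_le {d n : ℕ} (X : Fin n → E d) (x u : E d) (hu : ‖u‖ = 1) :
    depth X x ≤ (sideCount X u x : ℝ) / (n : ℝ) :=
  csInf_le ⟨0, aux_depth_bddBelow X x⟩ ⟨u, hu, rfl⟩

private lemma aux_le_depth {d n : ℕ} (X : Fin n → E d) (x : E d) (b : ℝ) (hd : 0 < d)
    (h : ∀ u : E d, ‖u‖ = 1 → b ≤ (sideCount X u x : ℝ) / (n : ℝ)) : b ≤ depth X x := by
  obtain ⟨u, hu⟩ := aux_exists_unit (d := d) hd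
  exact le_csInf ⟨_, u, hu, rfl⟩ (by rintro r ⟨v, hv, rfl⟩; exact h v hv)

private lemma aux_div_le_div (a b c : ℝ) (h : a ≤ b) (hc : 0 ≤ c) : a / c ≤ b / c := by
  rcases hc.eq_or_lt with rfl | hc
  · simp
  · exact (div_le_div_iff_of_pos_right hc).2 h

/-- Let `y ∉ cov(Xⁿ)` and let `Yᵐ` consist of `m` repetitions of `y`. Then
(i) every `x ∈ cov(Xⁿ ∪ Yᵐ) \ cov(Xⁿ)` with `x ≠ y` has depth at most `m/(n+m)` in the
contaminated sample, (ii) `y` has depth at least `m/(n+m)`, and consequently (iii) the depth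
of `y` equals the supremum of the depths over `cov(Xⁿ ∪ Yᵐ) \ cov(Xⁿ)`. -/
theorem depth_outside_hull {d n m : ℕ} (hd : 2 ≤ d) (X : Fin n → E d) (y : E d)
    (hy : y ∉ convexHull ℝ (Set.range X)) :
    (∀ x ∈ convexHull ℝ (Set.range (Fin.append X (fun _ : Fin m => y))) \
        convexHull ℝ (Set.range X), x ≠ y →
      depth (Fin.append X (fun _ : Fin m => y)) x ≤ (m : ℝ) / ((n : ℝ) + (m : ℝ))) ∧
    ((m : ℝ) / ((n : ℝ) + (m : ℝ)) ≤ depth (Fin.append X (fun _ : Fin m => y)) y) ∧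
    depth (Fin.append X (fun _ : Fin m => y)) y =
      sSup {r : ℝ | ∃ z ∈ convexHull ℝ (Set.range (Fin.append X (fun _ : Fin m => y))) \
        convexHull ℝ (Set.range X), r = depth (Fin.append X (fun _ : Fin m => y)) z} := by
  have hd0 : 0 < d := by omega
  set Z : Fin (n+m) → E d := Fin.append X (fun _ : Fin m => y) with hZdef
  have hcast : ((n+m : ℕ) : ℝ) = (n:ℝ) + (m:ℝ) := by push_cast; ring
  have hdenom : (0:ℝ) ≤ (n:ℝ) + (m:ℝ) := by positivity
  have key1 : ∀ x : E d, x ∉ convexHull ℝ (Set.range X) →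
      depth Z x ≤ (m:ℝ)/((n:ℝ)+(m:ℝ)) := by
    intro x hx
    obtain ⟨u, hu, hsep⟩ := aux_exists_sep hd0 X x hx
    have h1 : depth Z x ≤ (sideCount Z u x : ℝ)/((n+m:ℕ):ℝ) := aux_depth_le Z x u hu
    have h2 : (sideCount Z u x : ℝ) ≤ (m:ℝ) :=
      Nat.cast_le.2 (aux_sideCount_le_m X y x u hsep)
    rw [hcast] at h1
    exact h1.trans (aux_div_le_div _ _ _ h2 hdenom)
  have key2 : (m:ℝ)/((n:ℝ)+(m:ℝ)) ≤ depth Z y := by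
    refine aux_le_depth Z y _ hd0 fun u hu => ?_
    have h2 : (m:ℝ) ≤ (sideCount Z u y : ℝ) := Nat.cast_le.2 (aux_m_le_sideCount X y u)
    rw [hcast]
    exact aux_div_le_div _ _ _ h2 hdenom
  have hdy : depth Z y = (m:ℝ)/((n:ℝ)+(m:ℝ)) := le_antisymm (key1 y hy) key2
  refine ⟨fun x hx _ => key1 x hx.2, key2, ?_⟩
  rcases Nat.eq_zero_or_pos m with hm | hm
  · subst hm
    have hr : Set.range Z = Set.range X := by
      apply Set.Subset.antisymm
      · rintro w ⟨i, rfl⟩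
        have hin : (i:ℕ) < n := by omega
        refine ⟨⟨i, hin⟩, ?_⟩
        have hie : Fin.castAdd 0 ⟨(i:ℕ), hin⟩ = i := Fin.ext rfl
        have he1 : Z (Fin.castAdd 0 ⟨(i:ℕ), hin⟩) = X ⟨(i:ℕ), hin⟩ := by
          rw [hZdef]; exact Fin.append_left _ _ _
        exact he1.symm.trans (congrArg Z hie)
      · rintro w ⟨j, rfl⟩
        exact ⟨Fin.castAdd 0 j, by rw [hZdef, Fin.append_left]⟩
    have hT : {r : ℝ | ∃ z ∈ convexHull ℝ (Set.range Z) \ convexHull ℝ (Set.range X),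
        r = depth Z z} = ∅ := by
      rw [Set.eq_empty_iff_forall_notMem]
      rintro r ⟨z, ⟨hz1, hz2⟩, _⟩
      exact hz2 (hr ▸ hz1)
    rw [hT, Real.sSup_empty, hdy]
    simp
  · have hyZ : y ∈ convexHull ℝ (Set.range Z) :=
      subset_convexHull ℝ _ ⟨Fin.natAdd n ⟨0, hm⟩, by rw [hZdef, Fin.append_right]⟩
    have hyT : (m:ℝ)/((n:ℝ)+(m:ℝ)) ∈ {r : ℝ | ∃ z ∈ convexHull ℝ (Set.range Z) \
        convexHull ℝ (Set.range X), r = depth Z z} := ⟨y, ⟨hyZ, hy⟩, hdy.symm⟩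
    have hub : ∀ r ∈ {r : ℝ | ∃ z ∈ convexHull ℝ (Set.range Z) \
        convexHull ℝ (Set.range X), r = depth Z z}, r ≤ (m:ℝ)/((n:ℝ)+(m:ℝ)) := by
      rintro r ⟨z, ⟨hz1, hz2⟩, rfl⟩
      exact key1 z hz2
    rw [hdy]
    exact le_antisymm (le_csSup ⟨_, hub⟩ hyT) (csSup_le ⟨_, hyT⟩ hub)
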